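/- arXiv:1501.07815 — 3 statements merged into one kernel-verified Lean document; each statement's English description precedes it below -/
import Mathlib

section
/- Let Σ be a symmetric positive definite r×r matrix, Γ an r×u matrix with orthonormal columns and Γ₀ an r×(r-u) matrix whose columns complete Γ to an orthonormal basis of ℝ^r. Then span(Γ) is a reducing subspace of Σ if and only if Σ = Γ Ω Γᵀ + Γ₀ Ω₀ Γ₀ᵀ for some symmetric positive definite matrices Ω (u×u) and Ω₀ ((r-u)×(r-u)), and in that case Ω = Γᵀ Σ Γ and Ω₀ = Γ₀ᵀ Σ Γ₀. -/
open Matrix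

lemma posdef_conj_aux {r m : ℕ} (Sig : Matrix (Fin r) (Fin r) ℝ) (hSig : Sig.PosDef)
    (B : Matrix (Fin r) (Fin m) ℝ) (hB : Bᵀ * B = 1) : (Bᵀ * Sig * B).PosDef := by
  rw [Matrix.posDef_iff_dotProduct_mulVec]
  constructor
  · have : (Bᴴ * Sig * B).IsHermitian :=
      Matrix.isHermitian_conjTranspose_mul_mul B hSig.1
    simpa [Matrix.conjTranspose_eq_transpose_of_trivial] using this
  · intro x hx
    have hBx : B *ᵥ x ≠ 0 := by
      intro h
      apply hx
      have : Bᵀ *ᵥ (B *ᵥ x) = x := by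
        rw [Matrix.mulVec_mulVec, hB, Matrix.one_mulVec]
      rw [h, Matrix.mulVec_zero] at this
      exact this.symm
    have := (Matrix.posDef_iff_dotProduct_mulVec.mp hSig).2 hBx
    simpa [Matrix.dotProduct_mulVec, ← Matrix.vecMul_vecMul, Matrix.vecMul_transpose]
      using this

/-- for a symmetric positive definite `Sig`, with `(Γ, Γ₀)` an orthonormal basis
split of `ℝ^r`, `span(Γ)` reduces `Sig` (equivalently, with `P = ΓΓᵀ` the orthogonal projection
onto `span(Γ)`, `Sig = P Sig P + (I-P) Sig (I-P)`) iff `Sig = Γ Ω Γᵀ + Γ₀ Ω₀ Γ₀ᵀ` for some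
symmetric positive definite `Ω`, `Ω₀`; and in that case `Ω = Γᵀ Sig Γ`, `Ω₀ = Γ₀ᵀ Sig Γ₀`. -/
theorem reducing_iff_envelope_decomposition {r u : ℕ}
    (Sig : Matrix (Fin r) (Fin r) ℝ) (hSig : Sig.PosDef) (hSigsymm : Sig.IsSymm)
    (Γ : Matrix (Fin r) (Fin u) ℝ) (Γ₀ : Matrix (Fin r) (Fin (r - u)) ℝ)
    (hΓ : Γᵀ * Γ = 1) (hΓ₀ : Γ₀ᵀ * Γ₀ = 1) (horth : Γᵀ * Γ₀ = 0)
    (hcomplete : Γ * Γᵀ + Γ₀ * Γ₀ᵀ = 1) :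
    (Sig = (Γ * Γᵀ) * Sig * (Γ * Γᵀ) + (1 - Γ * Γᵀ) * Sig * (1 - Γ * Γᵀ) ↔
      ∃ (Ω : Matrix (Fin u) (Fin u) ℝ) (Ω₀ : Matrix (Fin (r - u)) (Fin (r - u)) ℝ),
        Ω.PosDef ∧ Ω₀.PosDef ∧ Sig = Γ * Ω * Γᵀ + Γ₀ * Ω₀ * Γ₀ᵀ) ∧
    (∀ (Ω : Matrix (Fin u) (Fin u) ℝ) (Ω₀ : Matrix (Fin (r - u)) (Fin (r - u)) ℝ),
      Ω.PosDef → Ω₀.PosDef → Sig = Γ * Ω * Γᵀ + Γ₀ * Ω₀ * Γ₀ᵀ →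
        Ω = Γᵀ * Sig * Γ ∧ Ω₀ = Γ₀ᵀ * Sig * Γ₀) := by
  have horth' : Γ₀ᵀ * Γ = 0 := by
    have := congrArg Matrix.transpose horth
    simpa [Matrix.transpose_mul] using this
  have hQ : (1 : Matrix (Fin r) (Fin r) ℝ) - Γ * Γᵀ = Γ₀ * Γ₀ᵀ := by
    rw [← hcomplete]; abel
  -- simp helper lemmas
  have e1 : ∀ {m : ℕ} (X : Matrix (Fin u) (Fin m) ℝ), Γᵀ * (Γ * X) = X := fun X => by
    rw [← Matrix.mul_assoc, hΓ, Matrix.one_mul]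
  have e2 : ∀ {m : ℕ} (X : Matrix (Fin (r-u)) (Fin m) ℝ), Γᵀ * (Γ₀ * X) = 0 := fun X => by
    rw [← Matrix.mul_assoc, horth, Matrix.zero_mul]
  have e3 : ∀ {m : ℕ} (X : Matrix (Fin (r-u)) (Fin m) ℝ), Γ₀ᵀ * (Γ₀ * X) = X := fun X => by
    rw [← Matrix.mul_assoc, hΓ₀, Matrix.one_mul]
  have e4 : ∀ {m : ℕ} (X : Matrix (Fin u) (Fin m) ℝ), Γ₀ᵀ * (Γ * X) = 0 := fun X => by
    rw [← Matrix.mul_assoc, horth', Matrix.zero_mul]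
  constructor
  · constructor
    · intro h
      refine ⟨Γᵀ * Sig * Γ, Γ₀ᵀ * Sig * Γ₀, posdef_conj_aux Sig hSig Γ hΓ,
        posdef_conj_aux Sig hSig Γ₀ hΓ₀, ?_⟩
      conv_lhs => rw [h]
      rw [hQ]
      simp only [Matrix.mul_assoc]
    · rintro ⟨Ω, Ω₀, _, _, rfl⟩
      rw [hQ]
      simp only [Matrix.mul_add, Matrix.add_mul, Matrix.mul_assoc, e1, e2, e3, e4,
        Matrix.mul_zero, Matrix.zero_mul, add_zero, zero_add, Matrix.mul_one]
  · rintro Ω Ω₀ _ _ rfl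
    constructor
    · simp only [Matrix.mul_add, Matrix.add_mul, Matrix.mul_assoc, e1, e2, e3, e4, hΓ, hΓ₀,
        horth, horth', Matrix.mul_zero, Matrix.zero_mul, add_zero, zero_add, Matrix.mul_one]
    · simp only [Matrix.mul_add, Matrix.add_mul, Matrix.mul_assoc, e1, e2, e3, e4, hΓ, hΓ₀,
        horth, horth', Matrix.mul_zero, Matrix.zero_mul, add_zero, zero_add, Matrix.mul_one]
end

section
/- Let J be symmetric positive definite, and let H, K be matrices with span(K) ⊆ span(H). Then H(HᵀJH)⁺Hᵀ − K(KᵀJK)⁺Kᵀ = J^{-1/2}(P_{J^{1/2}H} − P_{J^{1/2}K})J^{-1/2} = J^{-1/2} P_{J^{1/2}H} Q_{J^{1/2}K} J^{-1/2}, and this difference is positive semidefinite. -/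
open Matrix

/-- `G` is the Moore–Penrose pseudoinverse of the square matrix `A`. -/
def IsMoorePenroseInv {n : ℕ} (A G : Matrix (Fin n) (Fin n) ℝ) : Prop :=
  A * G * A = A ∧ G * A * G = G ∧ (A * G)ᵀ = A * G ∧ (G * A)ᵀ = G * A

/-- The positive semidefinite square root of a positive semidefinite matrix (the definition
of `Matrix.PosSemidef.sqrt` in the older Mathlib, which has since been removed). -/
noncomputable def Matrix.PosSemidef.sqrt {n : Type*} [Fintype n] [DecidableEq n]
    {A : Matrix n n ℝ} (hA : A.PosSemidef) : Matrix n n ℝ :=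
  (hA.1.eigenvectorUnitary : Matrix n n ℝ) * diagonal ((↑) ∘ (√·) ∘ hA.1.eigenvalues) *
    (star hA.1.eigenvectorUnitary : Matrix n n ℝ)

lemma posSemidef_sqrt_conjTranspose {n : ℕ} (J : Matrix (Fin n) (Fin n) ℝ) (hJ : J.PosSemidef) :
    (hJ.sqrt)ᴴ = hJ.sqrt := by
  unfold Matrix.PosSemidef.sqrt
  rw [conjTranspose_mul, conjTranspose_mul, diagonal_conjTranspose, ← Matrix.star_eq_conjTranspose,
    ← Matrix.star_eq_conjTranspose, star_star, Matrix.mul_assoc]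
  congr 3

lemma posSemidef_sqrt_mul_self' {n : ℕ} (J : Matrix (Fin n) (Fin n) ℝ) (hJ : J.PosSemidef) :
    hJ.sqrt * hJ.sqrt = J := by
  unfold Matrix.PosSemidef.sqrt
  conv_rhs => rw [hJ.1.spectral_theorem]
  rw [Unitary.conjStarAlgAut_apply]
  set U : Matrix (Fin n) (Fin n) ℝ := (hJ.1.eigenvectorUnitary : Matrix (Fin n) (Fin n) ℝ) with hUdef
  have hU : star U * U = 1 := by simp [hUdef]
  rw [show U * diagonal ((fun x => x) ∘ (fun x => √x) ∘ hJ.1.eigenvalues) * star U *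
      (U * diagonal ((fun x => x) ∘ (fun x => √x) ∘ hJ.1.eigenvalues) * star U) =
      U * diagonal ((fun x => x) ∘ (fun x => √x) ∘ hJ.1.eigenvalues) * (star U * U) *
      diagonal ((fun x => x) ∘ (fun x => √x) ∘ hJ.1.eigenvalues) * star U by
        simp only [Matrix.mul_assoc], hU, Matrix.mul_one, Matrix.mul_assoc U, diagonal_mul_diagonal]
  congr 3
  ext i
  simp [Real.mul_self_sqrt (hJ.eigenvalues_nonneg i)]

lemma matrix_ext_of_mulVec {m k : Type*} [Fintype k] [DecidableEq k]
    {A B : Matrix m k ℝ} (h : ∀ v, A *ᵥ v = B *ᵥ v) : A = B := by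
  ext i j
  have := congrFun (h (Pi.single j 1)) i
  simpa [Matrix.mulVec_single] using this

lemma mp_unique {m : ℕ} {A G1 G2 : Matrix (Fin m) (Fin m) ℝ}
    (h1 : IsMoorePenroseInv A G1) (h2 : IsMoorePenroseInv A G2) : G1 = G2 := by
  obtain ⟨p1, q1, r1, s1⟩ := h1
  obtain ⟨p2, q2, r2, s2⟩ := h2
  have hAG : A * G1 = A * G2 := by
    calc A * G1 = (A * G1)ᵀ := r1.symm
    _ = G1ᵀ * Aᵀ := by rw [transpose_mul]
    _ = G1ᵀ * (A * G2 * A)ᵀ := by rw [p2]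
    _ = (G1ᵀ * Aᵀ) * (A * G2)ᵀ := by simp only [transpose_mul, Matrix.mul_assoc]
    _ = (G1ᵀ * Aᵀ) * (A * G2) := by rw [r2]
    _ = (A * G1)ᵀ * (A * G2) := by rw [← transpose_mul]
    _ = (A * G1) * (A * G2) := by rw [r1]
    _ = A * G2 := by
        rw [show A * G1 * (A * G2) = (A * G1 * A) * G2 by simp only [Matrix.mul_assoc], p1]
  have hGA : G1 * A = G2 * A := by
    calc G1 * A = (G1 * A)ᵀ := s1.symm
    _ = Aᵀ * G1ᵀ := by rw [transpose_mul]
    _ = (A * G2 * A)ᵀ * G1ᵀ := by rw [p2]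
    _ = (G2 * A)ᵀ * (Aᵀ * G1ᵀ) := by simp only [transpose_mul, Matrix.mul_assoc]
    _ = (G2 * A) * (Aᵀ * G1ᵀ) := by rw [s2]
    _ = (G2 * A) * (G1 * A)ᵀ := by rw [← transpose_mul]
    _ = (G2 * A) * (G1 * A) := by rw [s1]
    _ = G2 * A := by
        rw [show (G2 * A) * (G1 * A) = G2 * (A * G1 * A) by simp only [Matrix.mul_assoc], p1]
  calc G1 = G1 * A * G1 := q1.symm
  _ = G1 * (A * G2) := by rw [Matrix.mul_assoc, hAG]
  _ = G2 * A * G2 := by rw [← Matrix.mul_assoc, hGA]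
  _ = G2 := q2

lemma mp_symm {m : ℕ} {A G : Matrix (Fin m) (Fin m) ℝ} (hA : Aᵀ = A)
    (hG : IsMoorePenroseInv A G) : Gᵀ = G := by
  refine mp_unique ?_ hG
  obtain ⟨p, q, r, s⟩ := hG
  refine ⟨?_, ?_, ?_, ?_⟩
  · calc A * Gᵀ * A = (Aᵀ * G * Aᵀ)ᵀ := by simp [transpose_mul, Matrix.mul_assoc]
    _ = (A * G * A)ᵀ := by rw [hA]
    _ = A := by rw [p, hA]
  · calc Gᵀ * A * Gᵀ = (G * Aᵀ * G)ᵀ := by simp only [transpose_mul, transpose_transpose, Matrix.mul_assoc]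
    _ = (G * A * G)ᵀ := by rw [hA]
    _ = Gᵀ := by rw [q]
  · calc (A * Gᵀ)ᵀ = G * Aᵀ := by rw [transpose_mul, transpose_transpose]
    _ = G * A := by rw [hA]
    _ = (G * A)ᵀ := s.symm
    _ = Aᵀ * Gᵀ := by rw [transpose_mul]
    _ = A * Gᵀ := by rw [hA]
  · calc (Gᵀ * A)ᵀ = Aᵀ * G := by rw [transpose_mul, transpose_transpose]
    _ = A * G := by rw [hA]
    _ = (A * G)ᵀ := r.symm
    _ = Gᵀ * Aᵀ := by rw [transpose_mul]
    _ = Gᵀ * A := by rw [hA]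

lemma proj_eq {n m : ℕ} {A : Matrix (Fin n) (Fin m) ℝ} {G : Matrix (Fin m) (Fin m) ℝ}
    (hG : IsMoorePenroseInv (Aᵀ * A) G) {P : Matrix (Fin n) (Fin n) ℝ}
    (hPs : P.IsSymm) (hPi : P * P = P)
    (hPr : LinearMap.range P.mulVecLin = LinearMap.range A.mulVecLin) :
    P = A * G * Aᵀ := by
  have hGs : Gᵀ = G :=
    mp_symm (by simp only [transpose_mul, transpose_transpose]) hG
  obtain ⟨p, q, r, s⟩ := hG
  have p' : Aᵀ * (A * (G * (Aᵀ * A))) = Aᵀ * A := by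
    simpa only [Matrix.mul_assoc] using p
  have q' : G * (Aᵀ * (A * G)) = G := by
    simpa only [Matrix.mul_assoc] using q
  have hB : (A * G * (Aᵀ * A) - A)ᵀ * (A * G * (Aᵀ * A) - A) = 0 := by
    simp only [transpose_sub, transpose_mul, transpose_transpose, hGs,
      Matrix.sub_mul, Matrix.mul_sub, Matrix.mul_assoc, p', sub_self]
  have hB0 : A * G * (Aᵀ * A) - A = 0 := by
    rw [← Matrix.conjTranspose_eq_transpose_of_trivial] at hB
    exact Matrix.conjTranspose_mul_self_eq_zero.mp hB
  have hQA : (A * G * Aᵀ) * A = A := by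
    have h := sub_eq_zero.mp hB0
    calc (A * G * Aᵀ) * A = A * G * (Aᵀ * A) := by rw [Matrix.mul_assoc]
    _ = A := h
  have hQs : (A * G * Aᵀ)ᵀ = A * G * Aᵀ := by
    simp only [transpose_mul, transpose_transpose, hGs, Matrix.mul_assoc]
  have hPQ : P * (A * G * Aᵀ) = A * G * Aᵀ := by
    apply matrix_ext_of_mulVec
    intro v
    have hmem : (A * G * Aᵀ) *ᵥ v ∈ LinearMap.range P.mulVecLin := by
      rw [hPr]
      exact ⟨(G * Aᵀ) *ᵥ v, by simp [Matrix.mulVecLin_apply, Matrix.mulVec_mulVec,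
        Matrix.mul_assoc]⟩
    obtain ⟨y, hy⟩ := hmem
    simp only [Matrix.mulVecLin_apply] at hy
    rw [← Matrix.mulVec_mulVec, ← hy, Matrix.mulVec_mulVec, hPi, hy]
  have hQP : (A * G * Aᵀ) * P = P := by
    apply matrix_ext_of_mulVec
    intro v
    have hmem : P *ᵥ v ∈ LinearMap.range A.mulVecLin := by
      rw [← hPr]; exact ⟨v, rfl⟩
    obtain ⟨y, hy⟩ := hmem
    simp only [Matrix.mulVecLin_apply] at hy
    rw [← Matrix.mulVec_mulVec, ← hy, Matrix.mulVec_mulVec, hQA]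
  calc P = Pᵀ := hPs.symm
  _ = ((A * G * Aᵀ) * P)ᵀ := by rw [hQP]
  _ = Pᵀ * (A * G * Aᵀ)ᵀ := transpose_mul _ _
  _ = P * (A * G * Aᵀ) := by rw [hPs, hQs]
  _ = A * G * Aᵀ := hPQ

lemma proj_absorb {n : ℕ} {P Q : Matrix (Fin n) (Fin n) ℝ} (hPi : P * P = P)
    (h : LinearMap.range Q.mulVecLin ≤ LinearMap.range P.mulVecLin) : P * Q = Q := by
  apply matrix_ext_of_mulVec
  intro v
  obtain ⟨y, hy⟩ := h ⟨v, rfl⟩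
  simp only [Matrix.mulVecLin_apply] at hy
  rw [← Matrix.mulVec_mulVec, ← hy, Matrix.mulVec_mulVec, hPi, hy]

/-- for `J` symmetric positive definite and `span(K) ⊆ span(H)`,
`H(HᵀJH)⁺Hᵀ − K(KᵀJK)⁺Kᵀ = J^{-1/2}(P_{J^{1/2}H} − P_{J^{1/2}K})J^{-1/2}
= J^{-1/2} P_{J^{1/2}H} Q_{J^{1/2}K} J^{-1/2}`, and this difference is positive
semidefinite. Here `P_A` is the orthogonal projection (symmetric idempotent matrix)
onto the column space of `A`, and `⁺` the Moore–Penrose pseudoinverse. -/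
theorem pseudoinverse_projection_difference {n a b : ℕ}
    (J : Matrix (Fin n) (Fin n) ℝ) (hJ : J.PosDef)
    (H : Matrix (Fin n) (Fin a) ℝ) (K : Matrix (Fin n) (Fin b) ℝ)
    (hspan : LinearMap.range K.mulVecLin ≤ LinearMap.range H.mulVecLin)
    (GH : Matrix (Fin a) (Fin a) ℝ) (hGH : IsMoorePenroseInv (Hᵀ * J * H) GH)
    (GK : Matrix (Fin b) (Fin b) ℝ) (hGK : IsMoorePenroseInv (Kᵀ * J * K) GK)
    (PH PK : Matrix (Fin n) (Fin n) ℝ)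
    (hPHsymm : PH.IsSymm) (hPHidem : PH * PH = PH)
    (hPHrange : LinearMap.range PH.mulVecLin =
      LinearMap.range (hJ.posSemidef.sqrt * H).mulVecLin)
    (hPKsymm : PK.IsSymm) (hPKidem : PK * PK = PK)
    (hPKrange : LinearMap.range PK.mulVecLin =
      LinearMap.range (hJ.posSemidef.sqrt * K).mulVecLin) :
    H * GH * Hᵀ - K * GK * Kᵀ =
        (hJ.posSemidef.sqrt)⁻¹ * (PH - PK) * (hJ.posSemidef.sqrt)⁻¹ ∧
      H * GH * Hᵀ - K * GK * Kᵀ =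
        (hJ.posSemidef.sqrt)⁻¹ * (PH * (1 - PK)) * (hJ.posSemidef.sqrt)⁻¹ ∧
      (H * GH * Hᵀ - K * GK * Kᵀ).PosSemidef := by

  set S := hJ.posSemidef.sqrt with hSdef
  have hSs : Sᵀ = S := by
    rw [← Matrix.conjTranspose_eq_transpose_of_trivial]
    exact posSemidef_sqrt_conjTranspose J hJ.posSemidef
  have hSS : S * S = J := posSemidef_sqrt_mul_self' J hJ.posSemidef
  have hdet : IsUnit S.det := by
    have hdd : S.det * S.det = J.det := by rw [← Matrix.det_mul, hSS]
    refine isUnit_iff_ne_zero.mpr fun h => ?_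
    rw [h, mul_zero] at hdd
    exact hJ.det_pos.ne' hdd.symm
  have hinv1 : S⁻¹ * S = 1 := Matrix.nonsing_inv_mul S hdet
  have hinv2 : S * S⁻¹ = 1 := Matrix.mul_nonsing_inv S hdet
  have cancel : ∀ X : Matrix (Fin n) (Fin n) ℝ, S⁻¹ * (S * X * S) * S⁻¹ = X := by
    intro X
    calc S⁻¹ * (S * X * S) * S⁻¹ = (S⁻¹ * S) * (X * (S * S⁻¹)) := by
          simp only [Matrix.mul_assoc]
    _ = X := by rw [hinv1, hinv2, Matrix.one_mul, Matrix.mul_one]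
  -- convert hypotheses
  have hHJH : (S * H)ᵀ * (S * H) = Hᵀ * J * H := by
    calc (S * H)ᵀ * (S * H) = Hᵀ * (S * (S * H)) := by
          rw [Matrix.transpose_mul, hSs, Matrix.mul_assoc]
    _ = Hᵀ * (J * H) := by rw [← Matrix.mul_assoc S S H, hSS]
    _ = Hᵀ * J * H := (Matrix.mul_assoc _ _ _).symm
  have hKJK : (S * K)ᵀ * (S * K) = Kᵀ * J * K := by
    calc (S * K)ᵀ * (S * K) = Kᵀ * (S * (S * K)) := by
          rw [Matrix.transpose_mul, hSs, Matrix.mul_assoc]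
    _ = Kᵀ * (J * K) := by rw [← Matrix.mul_assoc S S K, hSS]
    _ = Kᵀ * J * K := (Matrix.mul_assoc _ _ _).symm
  rw [← hHJH] at hGH
  rw [← hKJK] at hGK
  have hPH2 : PH = (S * H) * GH * (S * H)ᵀ := proj_eq hGH hPHsymm hPHidem hPHrange
  have hPK2 : PK = (S * K) * GK * (S * K)ᵀ := proj_eq hGK hPKsymm hPKidem hPKrange
  have hPH3 : PH = S * (H * GH * Hᵀ) * S := by
    rw [hPH2]
    simp only [Matrix.transpose_mul, hSs, Matrix.mul_assoc]
  have hPK3 : PK = S * (K * GK * Kᵀ) * S := by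
    rw [hPK2]
    simp only [Matrix.transpose_mul, hSs, Matrix.mul_assoc]
  have hXH : H * GH * Hᵀ = S⁻¹ * PH * S⁻¹ := by rw [hPH3, cancel]
  have hXK : K * GK * Kᵀ = S⁻¹ * PK * S⁻¹ := by rw [hPK3, cancel]
  have eq1 : H * GH * Hᵀ - K * GK * Kᵀ = S⁻¹ * (PH - PK) * S⁻¹ := by
    rw [hXH, hXK, Matrix.mul_sub, Matrix.sub_mul]
  -- range comparison
  have hrange : LinearMap.range (S * K).mulVecLin ≤ LinearMap.range (S * H).mulVecLin := by
    rintro x ⟨v, rfl⟩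
    obtain ⟨w, hw⟩ := hspan ⟨v, rfl⟩
    refine ⟨w, ?_⟩
    simp only [Matrix.mulVecLin_apply] at hw ⊢
    rw [← Matrix.mulVec_mulVec, hw, Matrix.mulVec_mulVec]
  have hPHPK : PH * PK = PK := proj_absorb hPHidem (by rw [hPKrange, hPHrange]; exact hrange)
  have hPKPH : PK * PH = PK := by
    have h1 : PK * PH = (PH * PK)ᵀ := by rw [Matrix.transpose_mul, hPKsymm, hPHsymm]
    rw [h1, hPHPK, hPKsymm]
  refine ⟨eq1, ?_, ?_⟩
  · rw [Matrix.mul_sub, Matrix.mul_one, hPHPK]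
    exact eq1
  · have hD : (PH - PK) * (PH - PK) = PH - PK := by
      rw [Matrix.sub_mul, Matrix.mul_sub, Matrix.mul_sub, hPHidem, hPHPK, hPKPH, hPKidem]
      abel
    have hDs : (PH - PK)ᵀ = PH - PK := by rw [Matrix.transpose_sub, hPHsymm, hPKsymm]
    have hDpsd : (PH - PK).PosSemidef := by
      have h2 := Matrix.posSemidef_conjTranspose_mul_self (PH - PK)
      rwa [Matrix.conjTranspose_eq_transpose_of_trivial, hDs, hD] at h2
    have hSinvs : (S⁻¹)ᴴ = S⁻¹ := by
      rw [Matrix.conjTranspose_eq_transpose_of_trivial, Matrix.transpose_nonsing_inv, hSs]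
    have h3 := hDpsd.mul_mul_conjTranspose_same S⁻¹
    rw [hSinvs] at h3
    rwa [eq1]
end

section
/- If a random tensor Y ∈ ℝ^{r₁×⋯×r_m} has vec(Y) with covariance Σ_m ⊗ ⋯ ⊗ Σ₁ and for each k the subspace S_k reduces Σ_k with span(B_(k)) ⊆ S_k, then the Kronecker product subspace S_m ⊗ ⋯ ⊗ S₁ reduces Σ_m ⊗ ⋯ ⊗ Σ₁ and contains span(B_{(m+1)}ᵀ); hence the tensor envelope satisfies T_Σ(B) ⊆ E_{Σ_m}(B_(m)) ⊗ ⋯ ⊗ E_{Σ₁}(B_(1)). -/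
open Matrix

variable {ι : Type*} [Fintype ι] [DecidableEq ι]

/-- The orthogonal projection onto a subspace `R`, as a linear endomorphism. -/
noncomputable def projOnto (R : Submodule ℝ (EuclideanSpace ℝ ι)) :
    EuclideanSpace ℝ ι →ₗ[ℝ] EuclideanSpace ℝ ι :=
  (R.subtypeL.comp R.orthogonalProjectionOnto).toLinearMap

/-- `R` is a reducing subspace of the matrix `M`: `M = P_R M P_R + Q_R M Q_R`. -/
def IsReducingSubspace (M : Matrix ι ι ℝ) (R : Submodule ℝ (EuclideanSpace ℝ ι)) : Prop :=
  Matrix.toEuclideanLin M = (projOnto R) ∘ₗ (Matrix.toEuclideanLin M) ∘ₗ (projOnto R) +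
    (LinearMap.id - projOnto R) ∘ₗ (Matrix.toEuclideanLin M) ∘ₗ (LinearMap.id - projOnto R)

/-- The Kronecker product `S_m ⊗ ⋯ ⊗ S₁` of a family of subspaces: the span of all Kronecker
products `v_m ⊗ ⋯ ⊗ v₁` with `v_k ∈ S_k`, realized on the product index type. -/
def kronSub {m : ℕ} {r : Fin m → ℕ}
    (S : ∀ k, Submodule ℝ (EuclideanSpace ℝ (Fin (r k)))) :
    Submodule ℝ (EuclideanSpace ℝ (∀ k, Fin (r k))) :=
  Submodule.span ℝ {w | ∃ v : ∀ k, EuclideanSpace ℝ (Fin (r k)),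
    (∀ k, v k ∈ S k) ∧ w = WithLp.toLp 2 (fun i => ∏ k, v k (i k))}

/-- The Kronecker product `Σ_m ⊗ ⋯ ⊗ Σ₁` of a family of square matrices, realized on the
product index type. -/
def kronFamily {m : ℕ} {r : Fin m → ℕ} (A : ∀ k, Matrix (Fin (r k)) (Fin (r k)) ℝ) :
    Matrix (∀ k, Fin (r k)) (∀ k, Fin (r k)) ℝ :=
  fun i j => ∏ k, A k (i k) (j k)

/-- The span of the mode-`k` fibers of the tensor `B` (i.e. `span(B_(k))`). -/
def modeSpan {m p : ℕ} {r : Fin m → ℕ} (B : (∀ k, Fin (r k)) → Fin p → ℝ) (k : Fin m) :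
    Submodule ℝ (EuclideanSpace ℝ (Fin (r k))) :=
  Submodule.span ℝ {w | ∃ (i : ∀ k', Fin (r k')) (ip : Fin p),
    w = fun a => B (Function.update i k a) ip}


section Aux
set_option linter.unusedSectionVars false

/-- The projection matrix of a subspace. -/
noncomputable def Pmat (R : Submodule ℝ (EuclideanSpace ℝ ι)) : Matrix ι ι ℝ :=
  LinearMap.toMatrix (PiLp.basisFun 2 ℝ ι) (PiLp.basisFun 2 ℝ ι) (projOnto R)

lemma Pmat_apply (R : Submodule ℝ (EuclideanSpace ℝ ι)) (v : EuclideanSpace ℝ ι) :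
    Matrix.toEuclideanLin (Pmat R) v = projOnto R v :=
  DFunLike.congr_fun (show Matrix.toEuclideanLin (Pmat R) = projOnto R by
    rw [Matrix.toEuclideanLin_eq_toLin]; exact Matrix.toLin_toMatrix _ _ (projOnto R)) v

lemma projOnto_mem (R : Submodule ℝ (EuclideanSpace ℝ ι)) (v : EuclideanSpace ℝ ι) :
    projOnto R v ∈ R := (R.orthogonalProjectionOnto v).2

lemma projOnto_eq_self (R : Submodule ℝ (EuclideanSpace ℝ ι)) {v : EuclideanSpace ℝ ι}
    (hv : v ∈ R) : projOnto R v = v := by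
  exact R.starProjection_eq_self_iff.mpr hv

lemma projOnto_eq_zero (R : Submodule ℝ (EuclideanSpace ℝ ι)) {v : EuclideanSpace ℝ ι}
    (hv : v ∈ Rᗮ) : projOnto R v = 0 := by
  simp [projOnto, Submodule.orthogonalProjectionOnto_apply_of_mem_orthogonal hv]

/-- A subspace reduces a Hermitian matrix iff it is invariant under it. -/
lemma reducing_iff_invariant {M : Matrix ι ι ℝ} (hM : M.IsHermitian)
    (R : Submodule ℝ (EuclideanSpace ℝ ι)) :
    IsReducingSubspace M R ↔ ∀ x ∈ R, Matrix.toEuclideanLin M x ∈ R := by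
  set L := Matrix.toEuclideanLin M with hL
  have hsymm : L.IsSymmetric := Matrix.isHermitian_iff_isSymmetric.1 hM
  constructor
  · intro h x hx
    have hx1 : projOnto R x = x := projOnto_eq_self R hx
    have := congrFun (congrArg (fun f : _ →ₗ[ℝ] _ => (f : _ → _)) h) x
    simp only [LinearMap.add_apply, LinearMap.comp_apply, LinearMap.sub_apply,
      LinearMap.id_apply, hx1, sub_self, map_zero, add_zero] at this
    rw [this]
    exact projOnto_mem R _
  · intro hinv
    have hperp : ∀ x ∈ Rᗮ, L x ∈ Rᗮ := by
      intro x hx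
      rw [Submodule.mem_orthogonal]
      intro u hu
      rw [← hsymm u x]
      exact (Submodule.mem_orthogonal R x).1 hx _ (hinv u hu)
    refine LinearMap.ext fun x => ?_
    have h1 : projOnto R (L (projOnto R x)) = L (projOnto R x) :=
      projOnto_eq_self R (hinv _ (projOnto_mem R x))
    have hmem : x - projOnto R x ∈ Rᗮ := Submodule.sub_starProjection_mem_orthogonal (K := R) x
    have h2 : projOnto R (L (x - projOnto R x)) = 0 :=
      projOnto_eq_zero R (hperp _ hmem)
    simp only [LinearMap.add_apply, LinearMap.comp_apply, LinearMap.sub_apply,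
      LinearMap.id_apply]
    rw [h1, h2, map_sub, sub_zero]
    abel

lemma toEuclideanLin_one (x : EuclideanSpace ℝ ι) :
    Matrix.toEuclideanLin (1 : Matrix ι ι ℝ) x = x := by
  ext i
  show ∑ j, (1 : Matrix ι ι ℝ) i j * x j = x i
  simp [Matrix.one_apply]

end Aux

section KronAux
variable {m : ℕ} {r : Fin m → ℕ}

lemma kron_hermitian (A : ∀ k, Matrix (Fin (r k)) (Fin (r k)) ℝ)
    (hA : ∀ k, (A k).IsHermitian) : (kronFamily A).IsHermitian := by
  refine Matrix.IsHermitian.ext fun i j => ?_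
  show (kronFamily A j i) = kronFamily A i j
  exact Finset.prod_congr rfl fun k _ => (hA k).apply (i k) (j k)

lemma kron_mulVec_elem (A : ∀ k, Matrix (Fin (r k)) (Fin (r k)) ℝ)
    (v : ∀ k, EuclideanSpace ℝ (Fin (r k))) :
    Matrix.toEuclideanLin (kronFamily A) (WithLp.toLp 2 (fun i => ∏ k, v k (i k))) =
      WithLp.toLp 2 (fun i => ∏ k, Matrix.toEuclideanLin (A k) (v k) (i k)) := by
  ext i
  show ∑ j, kronFamily A i j * ∏ k, v k (j k) = ∏ k, ∑ b, A k (i k) b * v k b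
  rw [Finset.prod_univ_sum]
  rw [← Fintype.piFinset_univ, Finset.sum_congr rfl]
  intro j _
  rw [kronFamily, ← Finset.prod_mul_distrib]

lemma kron_maps (A : ∀ k, Matrix (Fin (r k)) (Fin (r k)) ℝ)
    (T T' : ∀ k, Submodule ℝ (EuclideanSpace ℝ (Fin (r k))))
    (h : ∀ k, ∀ x ∈ T k, Matrix.toEuclideanLin (A k) x ∈ T' k) :
    ∀ x ∈ kronSub T, Matrix.toEuclideanLin (kronFamily A) x ∈ kronSub T' := by
  intro x hx
  rw [kronSub] at hx
  induction hx using Submodule.span_induction with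
  | mem w hw =>
    obtain ⟨v, hv, rfl⟩ := hw
    rw [kron_mulVec_elem]
    exact Submodule.subset_span ⟨fun k => Matrix.toEuclideanLin (A k) (v k),
      fun k => h k _ (hv k), rfl⟩
  | zero => simp [Submodule.zero_mem]
  | add y z _ _ hy hz => rw [map_add]; exact Submodule.add_mem _ hy hz
  | smul c y _ hy => rw [_root_.map_smul]; exact Submodule.smul_mem _ c hy

lemma mem_kronSub_top
    (T : ∀ k, Submodule ℝ (EuclideanSpace ℝ (Fin (r k)))) (hT : ∀ k, T k = ⊤)
    (x : EuclideanSpace ℝ (∀ k, Fin (r k))) : x ∈ kronSub T := by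
  have hx : x = ∑ i : (∀ k, Fin (r k)), x i • WithLp.toLp 2 (fun j => if i = j then (1:ℝ) else 0) := by
    ext j; simp
  rw [show x = ∑ i : (∀ k, Fin (r k)), x i • WithLp.toLp 2 (fun j => if i = j then (1:ℝ) else 0) from hx]
  refine Submodule.sum_mem _ fun i _ => Submodule.smul_mem _ _ ?_
  refine Submodule.subset_span ⟨fun k => WithLp.toLp 2 (fun a => if i k = a then 1 else 0),
    fun k => by rw [hT k]; trivial, ?_⟩
  ext j
  show (if i = j then (1:ℝ) else 0) = ∏ k, if i k = j k then 1 else 0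
  rw [Finset.prod_boole]
  congr 1
  simp [funext_iff]

lemma sum_update (i : ∀ l, Fin (r l)) (k : Fin m)
    (f : (∀ l, Fin (r l)) → ℝ)
    (hf : ∀ j, (∃ l, l ≠ k ∧ j l ≠ i l) → f j = 0) :
    ∑ j, f j = ∑ b, f (Function.update i k b) := by
  classical
  rw [← Finset.sum_filter_add_sum_filter_not Finset.univ
    (fun j => ∀ l, l ≠ k → j l = i l)]
  have h2 : ∑ j ∈ Finset.univ.filter (fun j => ¬ ∀ l, l ≠ k → j l = i l), f j = 0 := by
    refine Finset.sum_eq_zero fun j hj => ?_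
    simp only [Finset.mem_filter] at hj
    push_neg at hj
    obtain ⟨l, hl, hne⟩ := hj.2
    exact hf j ⟨l, hl, hne⟩
  rw [h2, add_zero]
  refine Finset.sum_nbij' (fun j => j k) (fun b => Function.update i k b) ?_ ?_ ?_ ?_ ?_
  · intro a _; exact Finset.mem_univ _
  · intro b _
    simp only [Finset.mem_filter, Finset.mem_univ, true_and]
    intro l hl; exact Function.update_of_ne hl _ _
  · intro j hj
    simp only [Finset.mem_filter, Finset.mem_univ, true_and] at hj
    funext l
    by_cases hl : l = k
    · subst hl; simp
    · show Function.update i k (j k) l = j l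
      rw [Function.update_of_ne hl]; exact (hj l hl).symm
  · intro b _; simp
  · intro j hj
    simp only [Finset.mem_filter, Finset.mem_univ, true_and] at hj
    congr 1
    funext l
    by_cases hl : l = k
    · subst hl; simp
    · rw [Function.update_of_ne hl]; exact hj l hl

lemma kron_update_fix (k : Fin m)
    (N : Matrix (Fin (r k)) (Fin (r k)) ℝ)
    (x : EuclideanSpace ℝ (∀ l, Fin (r l)))
    (hx : ∀ i : ∀ l, Fin (r l),
      Matrix.toEuclideanLin N (WithLp.toLp 2 (fun a => x (Function.update i k a))) =
        WithLp.toLp 2 (fun a => x (Function.update i k a))) :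
    Matrix.toEuclideanLin (kronFamily
      (Function.update (fun l => (1 : Matrix (Fin (r l)) (Fin (r l)) ℝ)) k N)) x = x := by
  classical
  set Q := Function.update (fun l => (1 : Matrix (Fin (r l)) (Fin (r l)) ℝ)) k N with hQ
  ext i
  show ∑ j, (∏ l, Q l (i l) (j l)) * x j = x i
  rw [sum_update i k _ ?zero]
  case zero =>
    intro j ⟨l, hl, hne⟩
    have : Q l (i l) (j l) = 0 := by
      rw [hQ, Function.update_of_ne hl, Matrix.one_apply_ne (fun h => hne (h.symm))]
    rw [Finset.prod_eq_zero (Finset.mem_univ l) this, zero_mul]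
  have hterm : ∀ b, (∏ l, Q l (i l) (Function.update i k b l)) = N (i k) b := by
    intro b
    rw [Finset.prod_eq_single_of_mem k (Finset.mem_univ k)]
    · rw [hQ, Function.update_self, Function.update_self]
    · intro l _ hl
      rw [hQ, Function.update_of_ne hl, Function.update_of_ne hl, Matrix.one_apply_eq]
  simp only [hterm]
  have h2 : (∑ b, N (i k) b * x (Function.update i k b)) =
      x (Function.update i k (i k)) :=
      congrArg (fun y : EuclideanSpace ℝ (Fin (r k)) => y (i k)) (hx i)
  rw [h2, Function.update_eq_self]

/-- Columns of `B` lie in any Kronecker product of subspaces containing the mode spans. -/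
lemma cols_mem {p : ℕ} (B : (∀ k, Fin (r k)) → Fin p → ℝ)
    (S : ∀ k, Submodule ℝ (EuclideanSpace ℝ (Fin (r k))))
    (hspan : ∀ k, modeSpan B k ≤ S k) (ip : Fin p) :
    WithLp.toLp 2 (fun i => B i ip) ∈ kronSub S := by
  classical
  have key : ∀ F : Finset (Fin m), WithLp.toLp 2 (fun i => B i ip) ∈
      kronSub (fun l => if l ∈ F then S l else ⊤) := by
    intro F
    induction F using Finset.induction_on with
    | empty => exact mem_kronSub_top _ (fun k => by simp) _
    | @insert k F hkF ih =>
      set Q := Function.update (fun l => (1 : Matrix (Fin (r l)) (Fin (r l)) ℝ)) k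
        (Pmat (S k)) with hQdef
      have hfix : Matrix.toEuclideanLin (kronFamily Q) (WithLp.toLp 2 (fun i => B i ip)) =
          WithLp.toLp 2 (fun i => B i ip) := by
        refine kron_update_fix k (Pmat (S k)) _ fun i => ?_
        have hfib : WithLp.toLp 2 (fun a => B (Function.update i k a) ip) ∈ S k :=
          hspan k (Submodule.subset_span ⟨i, ip, rfl⟩)
        rw [Pmat_apply]
        exact projOnto_eq_self (S k) hfib
      have hmaps := kron_maps Q (fun l => if l ∈ F then S l else ⊤)
        (fun l => if l ∈ insert k F then S l else ⊤) ?_ _ ih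
      · rwa [hfix] at hmaps
      · intro l x hx
        by_cases hl : l = k
        · subst hl
          have : Matrix.toEuclideanLin (Q l) x = projOnto (S l) x := by
            rw [hQdef, Function.update_self, Pmat_apply]
          rw [this]
          simp only [Finset.mem_insert_self, if_pos]
          exact projOnto_mem (S l) x
        · have : Matrix.toEuclideanLin (Q l) x = x := by
            rw [hQdef, Function.update_of_ne hl, toEuclideanLin_one]
          rw [this]
          by_cases hF : l ∈ F
          · simp only [Finset.mem_insert, hF, or_true, if_pos] at *
            simpa [hF] using hx
          · have : l ∉ insert k F := by simp [Finset.mem_insert, hl, hF]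
            simp only [this, if_neg, if_false]
            trivial
  have huniv := key Finset.univ
  have heq : (fun l => if l ∈ (Finset.univ : Finset (Fin m)) then S l else ⊤) = S :=
    funext fun l => if_pos (Finset.mem_univ l)
  rwa [heq] at huniv

end KronAux

/-- if for each `k` the subspace `S_k` reduces `Σ_k` and contains
`span(B_(k))`, then `S_m ⊗ ⋯ ⊗ S₁` reduces `Σ_m ⊗ ⋯ ⊗ Σ₁` and contains
`span(B_{(m+1)}ᵀ)`; hence the tensor envelope `T_Σ(B)` (the intersection of all such
Kronecker-product reducing subspaces containing `span(B_{(m+1)}ᵀ)`) satisfies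
`T_Σ(B) ⊆ E_{Σ_m}(B_(m)) ⊗ ⋯ ⊗ E_{Σ₁}(B_(1))`. -/
theorem tensor_envelope_subset {m p : ℕ} {r : Fin m → ℕ}
    (Sig : ∀ k, Matrix (Fin (r k)) (Fin (r k)) ℝ)
    (hSig : ∀ k, (Sig k).PosDef)
    (B : (∀ k, Fin (r k)) → Fin p → ℝ)
    (S : ∀ k, Submodule ℝ (EuclideanSpace ℝ (Fin (r k))))
    (hred : ∀ k, IsReducingSubspace (Sig k) (S k))
    (hspan : ∀ k, modeSpan B k ≤ S k) :
    IsReducingSubspace (kronFamily Sig) (kronSub S) ∧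
    (∀ ip : Fin p, WithLp.toLp 2 (fun i => B i ip) ∈ kronSub S) ∧
    (⨅ (E : ∀ k, Submodule ℝ (EuclideanSpace ℝ (Fin (r k))))
        (_ : IsReducingSubspace (kronFamily Sig) (kronSub E) ∧
          ∀ ip : Fin p, WithLp.toLp 2 (fun i => B i ip) ∈ kronSub E),
        kronSub E) ≤
      kronSub (fun k =>
        sInf {R | IsReducingSubspace (Sig k) R ∧ modeSpan B k ≤ R}) := by
  classical
  have hermK : (kronFamily Sig).IsHermitian := kron_hermitian Sig (fun k => (hSig k).1)
  -- general helper applying to any suitable family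
  have main : ∀ (T : ∀ k, Submodule ℝ (EuclideanSpace ℝ (Fin (r k)))),
      (∀ k, IsReducingSubspace (Sig k) (T k)) → (∀ k, modeSpan B k ≤ T k) →
      IsReducingSubspace (kronFamily Sig) (kronSub T) ∧
        ∀ ip : Fin p, WithLp.toLp 2 (fun i => B i ip) ∈ kronSub T := by
    intro T hredT hspanT
    constructor
    · refine (reducing_iff_invariant hermK _).2 ?_
      exact kron_maps Sig T T
        (fun k => (reducing_iff_invariant (hSig k).1 (T k)).1 (hredT k))
    · exact cols_mem B T hspanT
  obtain ⟨h1, h2⟩ := main S hred hspan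
  refine ⟨h1, h2, ?_⟩
  set E0 : ∀ k, Submodule ℝ (EuclideanSpace ℝ (Fin (r k))) :=
    fun k => sInf {R | IsReducingSubspace (Sig k) R ∧ modeSpan B k ≤ R} with hE0
  have hredE : ∀ k, IsReducingSubspace (Sig k) (E0 k) := by
    intro k
    refine (reducing_iff_invariant (hSig k).1 _).2 ?_
    intro x hx
    rw [Submodule.mem_sInf] at hx ⊢
    intro R hR
    exact (reducing_iff_invariant (hSig k).1 R).1 hR.1 x (hx R hR)
  have hspanE : ∀ k, modeSpan B k ≤ E0 k := fun k => le_sInf fun R hR => hR.2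
  obtain ⟨g1, g2⟩ := main E0 hredE hspanE
  exact iInf₂_le E0 ⟨g1, g2⟩
end
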